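/- arXiv:1803.11191 — 2 statements merged into one kernel-verified Lean document; each statement's English description precedes it below -/
import Mathlib

section
/- For nonnegative integers i, j, i', j' with i + j = i' + j', define a_{i'j'}^{ij} = 2^{−(i'+j')/2} i! j! Σ_{s=max(0,i'−j)}^{min(i',i)} (−1)^{j'−i+s} / (s!(i−s)!(i'−s)!(j'−i+s)!). Then for all x, y ∈ ℝ the one-dimensional Hermite polynomials satisfy He_i(h + g/2) He_j(h − g/2) = Σ_{i'+j' = i+j} a_{i'j'}^{ij} He_{i'}(√2 h) He_{j'}(g/√2). -/
open Real

/-- One-dimensional probabilists' Hermite polynomial. -/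
noncomputable def He (n : ℕ) (x : ℝ) : ℝ :=
  (-1:ℝ)^n * Real.exp (x^2/2) * iteratedDeriv n (fun y => Real.exp (-(y^2)/2)) x

/-- Three-dimensional Hermite polynomial (product of 1D ones). -/
noncomputable def hermite3 (k₁ k₂ k₃ : ℕ) (v : EuclideanSpace ℝ (Fin 3)) : ℝ :=
  He k₁ (v 0) * He k₂ (v 1) * He k₃ (v 2)

/-- The splitting coefficient `a_{i'j'}^{ij}`. -/
noncomputable def acoef (i j i' j' : ℕ) : ℝ :=
  (2:ℝ) ^ (-((i' + j' : ℕ) : ℝ) / 2) * (Nat.factorial i) * (Nat.factorial j) *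
    ∑ s ∈ Finset.Icc (i' - j) (min i' i),
      (-1:ℝ)^(j' + i + s) /
        ((Nat.factorial s) * (Nat.factorial (i - s)) * (Nat.factorial (i' - s)) *
          (Nat.factorial (j' + s - i)))


open Finset

/-- Combinatorial core of the splitting coefficient. -/
noncomputable def Scoef (i j a : ℕ) : ℝ :=
  ∑ s ∈ Finset.range (a+1), (-1:ℝ)^(j+a+s) * (i.choose s) * (j.choose (a-s))

lemma Scoef_zero_left (i j : ℕ) : Scoef (i+1) j 0 = Scoef i j 0 := by
  simp [Scoef]

lemma Scoef_zero_right (i j : ℕ) : Scoef i (j+1) 0 = - Scoef i j 0 := by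
  simp [Scoef, pow_succ]

lemma Scoef_succ_left (i j a : ℕ) :
    Scoef (i+1) j (a+1) = Scoef i j a + Scoef i j (a+1) := by
  unfold Scoef
  rw [Finset.sum_range_succ' (fun s => (-1:ℝ)^(j+(a+1)+s) * ((i+1).choose s) * (j.choose (a+1-s))) (a+1),
      Finset.sum_range_succ' (fun s => (-1:ℝ)^(j+(a+1)+s) * (i.choose s) * (j.choose (a+1-s))) (a+1)]
  have key : ∀ s ∈ Finset.range (a+1),
      (-1:ℝ)^(j+(a+1)+(s+1)) * ((i+1).choose (s+1)) * (j.choose (a+1-(s+1)))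
      = (-1:ℝ)^(j+a+s) * (i.choose s) * (j.choose (a-s))
        + (-1:ℝ)^(j+(a+1)+(s+1)) * (i.choose (s+1)) * (j.choose (a+1-(s+1))) := by
    intro s _
    have h1 : (i+1).choose (s+1) = i.choose s + i.choose (s+1) := Nat.choose_succ_succ i s
    have h2 : a + 1 - (s+1) = a - s := by omega
    have h3 : j + (a+1) + (s+1) = (j + a + s) + 2 := by ring
    rw [h1, h2, h3, pow_add]
    push_cast
    ring
  rw [Finset.sum_congr rfl key, Finset.sum_add_distrib]
  have h0 : ((i+1).choose 0 : ℝ) = (i.choose 0 : ℝ) := by norm_num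
  rw [h0]
  ring

lemma Scoef_succ_right (i j a : ℕ) :
    Scoef i (j+1) (a+1) = Scoef i j a - Scoef i j (a+1) := by
  unfold Scoef
  rw [Finset.sum_range_succ (fun s => (-1:ℝ)^((j+1)+(a+1)+s) * (i.choose s) * ((j+1).choose (a+1-s))) (a+1),
      Finset.sum_range_succ (fun s => (-1:ℝ)^(j+(a+1)+s) * (i.choose s) * (j.choose (a+1-s))) (a+1)]
  have key : ∀ s ∈ Finset.range (a+1),
      (-1:ℝ)^((j+1)+(a+1)+s) * (i.choose s) * ((j+1).choose (a+1-s))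
      = (-1:ℝ)^(j+a+s) * (i.choose s) * (j.choose (a-s))
        - (-1:ℝ)^(j+(a+1)+s) * (i.choose s) * (j.choose (a+1-s)) := by
    intro s hs
    simp only [Finset.mem_range] at hs
    have h2 : a + 1 - s = (a - s) + 1 := by omega
    have h1 : (j+1).choose (a+1-s) = j.choose (a-s) + j.choose (a+1-s) := by
      rw [h2, Nat.choose_succ_succ, Nat.succ_eq_add_one, ← h2]
    have h3 : (j+1) + (a+1) + s = (j + a + s) + 2 := by ring
    have h4 : j + (a+1) + s = (j + a + s) + 1 := by ring
    rw [h1, h3, h4, pow_add, pow_add]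
    push_cast
    ring
  rw [Finset.sum_congr rfl key, Finset.sum_sub_distrib]
  have l1 : ((j+1).choose (a+1-(a+1)) : ℝ) = (j.choose (a - (a+1)) : ℝ) := by
    simp [Nat.sub_self, Nat.sub_eq_zero_of_le]
  have h3 : (j+1) + (a+1) + (a+1) = (j + (a+1) + (a+1)) + 1 := by ring
  rw [l1, h3, pow_succ]
  have h5 : (a : ℕ) - (a+1) = 0 := by omega
  rw [Nat.sub_self, h5]
  ring

lemma Scoef_eq_zero (i j a : ℕ) (ha : i + j < a) : Scoef i j a = 0 := by
  unfold Scoef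
  apply Finset.sum_eq_zero
  intro s _
  rcases le_or_gt s i with hsi | hsi
  · have : j < a - s := by omega
    rw [Nat.choose_eq_zero_of_lt this]
    simp
  · rw [Nat.choose_eq_zero_of_lt hsi]
    simp


noncomputable def Gau : ℝ → ℝ := fun y => Real.exp (-(y^2)/2)

noncomputable def dcoef (i j a : ℕ) : ℝ := ((Real.sqrt 2)^(i+j))⁻¹ * Scoef i j a


lemma sqrt2_ne : (Real.sqrt 2) ≠ 0 := by positivity
lemma sqrt2_sq : (Real.sqrt 2) * Real.sqrt 2 = 2 := Real.mul_self_sqrt (by norm_num)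

lemma dcoef_succ_left (i j a : ℕ) :
    dcoef (i+1) j (a+1) = (Real.sqrt 2)⁻¹ * (dcoef i j a + dcoef i j (a+1)) := by
  unfold dcoef
  rw [Scoef_succ_left, show i+1+j = (i+j)+1 from by omega, pow_succ, mul_inv]
  ring

lemma dcoef_zero_left (i j : ℕ) :
    dcoef (i+1) j 0 = (Real.sqrt 2)⁻¹ * dcoef i j 0 := by
  unfold dcoef
  rw [Scoef_zero_left, show i+1+j = (i+j)+1 from by omega, pow_succ, mul_inv]
  ring

lemma dcoef_succ_right (i j a : ℕ) :
    dcoef i (j+1) (a+1) = (Real.sqrt 2)⁻¹ * (dcoef i j a - dcoef i j (a+1)) := by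
  unfold dcoef
  rw [Scoef_succ_right, show i+(j+1) = (i+j)+1 from by omega, pow_succ, mul_inv]
  ring

lemma dcoef_zero_right (i j : ℕ) :
    dcoef i (j+1) 0 = -((Real.sqrt 2)⁻¹ * dcoef i j 0) := by
  unfold dcoef
  rw [Scoef_zero_right, show i+(j+1) = (i+j)+1 from by omega, pow_succ, mul_inv]
  ring

lemma dcoef_eq_zero (i j a : ℕ) (ha : i + j < a) : dcoef i j a = 0 := by
  unfold dcoef; rw [Scoef_eq_zero i j a ha, mul_zero]

lemma contDiff_Gau : ContDiff ℝ ⊤ Gau := by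
  apply Real.contDiff_exp.comp
  exact (contDiff_id.pow 2).neg.div_const 2

lemma hasDerivAt_iterGau (p : ℕ) (x : ℝ) :
    HasDerivAt (iteratedDeriv p Gau) (iteratedDeriv (p+1) Gau x) x := by
  have hd : Differentiable ℝ (iteratedDeriv p Gau) :=
    contDiff_Gau.differentiable_iteratedDeriv p (by exact_mod_cast lt_top_iff_ne_top.2 (by simp))
  have := (hd x).hasDerivAt
  rwa [iteratedDeriv_succ]

/-- statement of the key expansion -/
def KeyStmt (i j : ℕ) : Prop :=
  ∀ h g : ℝ, iteratedDeriv i Gau (h + g/2) * iteratedDeriv j Gau (h - g/2)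
     = ∑ a ∈ Finset.range (i+j+1),
         dcoef i j a * iteratedDeriv a Gau (Real.sqrt 2 * h)
           * iteratedDeriv (i+j-a) Gau (g / Real.sqrt 2)

lemma key_base : KeyStmt 0 0 := by
  intro h g
  have hd : dcoef 0 0 0 = 1 := by
    unfold dcoef Scoef
    norm_num
  simp only [Nat.add_zero, Nat.zero_add, Finset.range_one, Finset.sum_singleton,
    iteratedDeriv_zero, Nat.zero_sub, hd, one_mul]
  show Real.exp (-((h+g/2)^2)/2) * Real.exp (-((h-g/2)^2)/2)
      = Real.exp (-((Real.sqrt 2*h)^2)/2) * Real.exp (-((g/Real.sqrt 2)^2)/2)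
  rw [← Real.exp_add, ← Real.exp_add]
  congr 1
  have h2 : (Real.sqrt 2)^2 = 2 := Real.sq_sqrt (by norm_num)
  rw [mul_pow, div_pow, h2]
  ring


lemma key_step_left (i j : ℕ) (IH : KeyStmt i j) : KeyStmt (i+1) j := by
  intro h g
  set n := i + j with hn
  -- derivative of LHS in h
  have h1 : HasDerivAt (fun x : ℝ => iteratedDeriv i Gau (x + g/2))
      (iteratedDeriv (i+1) Gau (h+g/2)) h := by
    have := (hasDerivAt_iterGau i (h+g/2)).comp h ((hasDerivAt_id h).add_const (g/2))
    simpa [Function.comp_def] using this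
  have h2 : HasDerivAt (fun x : ℝ => iteratedDeriv j Gau (x - g/2))
      (iteratedDeriv (j+1) Gau (h-g/2)) h := by
    have := (hasDerivAt_iterGau j (h-g/2)).comp h ((hasDerivAt_id h).sub_const (g/2))
    simpa [Function.comp_def] using this
  have hA := h1.fun_mul h2
  -- derivative of LHS in g
  have h3 : HasDerivAt (fun y : ℝ => iteratedDeriv i Gau (h + y/2))
      (iteratedDeriv (i+1) Gau (h+g/2) * (1/2)) g := by
    exact (hasDerivAt_iterGau i (h+g/2)).comp g (((hasDerivAt_id g).div_const 2).const_add h)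
  have h4 : HasDerivAt (fun y : ℝ => iteratedDeriv j Gau (h - y/2))
      (iteratedDeriv (j+1) Gau (h-g/2) * (-(1/2))) g := by
    have := (hasDerivAt_iterGau j (h-g/2)).comp g (((hasDerivAt_id g).div_const 2).const_sub h)
    simpa [Function.comp_def] using this
  have hB := h3.fun_mul h4
  -- derivative of RHS in h
  have hRA : HasDerivAt
      (fun x : ℝ => ∑ a ∈ Finset.range (n+1),
        dcoef i j a * iteratedDeriv a Gau (Real.sqrt 2 * x) * iteratedDeriv (n-a) Gau (g / Real.sqrt 2))
      (∑ a ∈ Finset.range (n+1),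
        dcoef i j a * (iteratedDeriv (a+1) Gau (Real.sqrt 2 * h) * Real.sqrt 2)
          * iteratedDeriv (n-a) Gau (g / Real.sqrt 2)) h := by
    apply HasDerivAt.fun_sum
    intro a _
    have inner : HasDerivAt (fun x : ℝ => Real.sqrt 2 * x) (Real.sqrt 2) h := by
      simpa using (hasDerivAt_id h).const_mul (Real.sqrt 2)
    exact (((hasDerivAt_iterGau a (Real.sqrt 2 * h)).comp h inner).const_mul
      (dcoef i j a)).mul_const _
  -- derivative of RHS in g
  have hRB : HasDerivAt
      (fun y : ℝ => ∑ a ∈ Finset.range (n+1),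
        dcoef i j a * iteratedDeriv a Gau (Real.sqrt 2 * h) * iteratedDeriv (n-a) Gau (y / Real.sqrt 2))
      (∑ a ∈ Finset.range (n+1),
        dcoef i j a * iteratedDeriv a Gau (Real.sqrt 2 * h)
          * (iteratedDeriv (n-a+1) Gau (g / Real.sqrt 2) * (1 / Real.sqrt 2))) g := by
    apply HasDerivAt.fun_sum
    intro a _
    exact ((hasDerivAt_iterGau (n-a) (g / Real.sqrt 2)).comp g
      ((hasDerivAt_id g).div_const (Real.sqrt 2))).const_mul _
  -- use IH to transfer
  have efunA : (fun x : ℝ => iteratedDeriv i Gau (x + g/2) * iteratedDeriv j Gau (x - g/2))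
      = (fun x : ℝ => ∑ a ∈ Finset.range (n+1),
        dcoef i j a * iteratedDeriv a Gau (Real.sqrt 2 * x) * iteratedDeriv (n-a) Gau (g / Real.sqrt 2)) := by
    funext x; exact IH x g
  have efunB : (fun y : ℝ => iteratedDeriv i Gau (h + y/2) * iteratedDeriv j Gau (h - y/2))
      = (fun y : ℝ => ∑ a ∈ Finset.range (n+1),
        dcoef i j a * iteratedDeriv a Gau (Real.sqrt 2 * h) * iteratedDeriv (n-a) Gau (y / Real.sqrt 2)) := by
    funext y; exact IH h y
  have eA := (efunA ▸ hA).unique hRA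
  have eB := (efunB ▸ hB).unique hRB
  -- combine: X = (1/2) * valA + valB
  have comb : iteratedDeriv (i+1) Gau (h+g/2) * iteratedDeriv j Gau (h-g/2)
      = (1/2) * (∑ a ∈ Finset.range (n+1),
          dcoef i j a * (iteratedDeriv (a+1) Gau (Real.sqrt 2 * h) * Real.sqrt 2)
            * iteratedDeriv (n-a) Gau (g / Real.sqrt 2))
        + (∑ a ∈ Finset.range (n+1),
          dcoef i j a * iteratedDeriv a Gau (Real.sqrt 2 * h)
            * (iteratedDeriv (n-a+1) Gau (g / Real.sqrt 2) * (1 / Real.sqrt 2))) := by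
    rw [← eA, ← eB]; ring
  rw [comb]
  -- now pure finset algebra
  have hcanL : (1/2) * (∑ a ∈ Finset.range (n+1),
          dcoef i j a * (iteratedDeriv (a+1) Gau (Real.sqrt 2 * h) * Real.sqrt 2)
            * iteratedDeriv (n-a) Gau (g / Real.sqrt 2))
        + (∑ a ∈ Finset.range (n+1),
          dcoef i j a * iteratedDeriv a Gau (Real.sqrt 2 * h)
            * (iteratedDeriv (n-a+1) Gau (g / Real.sqrt 2) * (1 / Real.sqrt 2)))
      = (∑ a ∈ Finset.range (n+1), (Real.sqrt 2)⁻¹ * dcoef i j a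
            * iteratedDeriv (a+1) Gau (Real.sqrt 2 * h) * iteratedDeriv (n-a) Gau (g / Real.sqrt 2))
        + (∑ a ∈ Finset.range (n+1), (Real.sqrt 2)⁻¹ * dcoef i j a
            * iteratedDeriv a Gau (Real.sqrt 2 * h) * iteratedDeriv (n+1-a) Gau (g / Real.sqrt 2)) := by
    rw [Finset.mul_sum]
    congr 1
    · apply Finset.sum_congr rfl
      intro a _
      have e : (1:ℝ)/2 * Real.sqrt 2 = (Real.sqrt 2)⁻¹ := by
        rw [inv_eq_one_div, eq_div_iff sqrt2_ne, mul_assoc, sqrt2_sq]; norm_num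
      rw [← e]; ring
    · apply Finset.sum_congr rfl
      intro a ha
      have ha' : a ≤ n := by simpa [Nat.lt_succ_iff] using Finset.mem_range.mp ha
      rw [show n - a + 1 = n + 1 - a from by omega, one_div]
      ring
  rw [hcanL]
  -- now massage the target
  have hrange : i+1+j+1 = n+2 := by omega
  have hsub : ∀ a : ℕ, i+1+j-a = n+1-a := fun a => by omega
  simp only [hrange, hsub]
  rw [Finset.sum_range_succ' (fun t => dcoef (i+1) j t * iteratedDeriv t Gau (Real.sqrt 2 * h)
      * iteratedDeriv (n+1-t) Gau (g / Real.sqrt 2)) (n+1)]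
  simp only [Nat.succ_sub_succ_eq_sub, Nat.sub_zero, dcoef_succ_left, dcoef_zero_left]
  -- expand the products
  have expand : ∀ a ∈ Finset.range (n+1),
      (Real.sqrt 2)⁻¹ * (dcoef i j a + dcoef i j (a+1)) * iteratedDeriv (a+1) Gau (Real.sqrt 2 * h)
        * iteratedDeriv (n-a) Gau (g / Real.sqrt 2)
      = (Real.sqrt 2)⁻¹ * dcoef i j a * iteratedDeriv (a+1) Gau (Real.sqrt 2 * h)
          * iteratedDeriv (n-a) Gau (g / Real.sqrt 2)
        + (Real.sqrt 2)⁻¹ * dcoef i j (a+1) * iteratedDeriv (a+1) Gau (Real.sqrt 2 * h)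
          * iteratedDeriv (n-a) Gau (g / Real.sqrt 2) := by
    intro a _; ring
  rw [Finset.sum_congr rfl expand, Finset.sum_add_distrib]
  -- second part recombines to the shifted sum
  have recomb : (∑ a ∈ Finset.range (n+1), (Real.sqrt 2)⁻¹ * dcoef i j (a+1)
        * iteratedDeriv (a+1) Gau (Real.sqrt 2 * h) * iteratedDeriv (n-a) Gau (g / Real.sqrt 2))
      + (Real.sqrt 2)⁻¹ * dcoef i j 0 * iteratedDeriv 0 Gau (Real.sqrt 2 * h)
          * iteratedDeriv (n+1) Gau (g / Real.sqrt 2)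
      = ∑ a ∈ Finset.range (n+1), (Real.sqrt 2)⁻¹ * dcoef i j a
          * iteratedDeriv a Gau (Real.sqrt 2 * h) * iteratedDeriv (n+1-a) Gau (g / Real.sqrt 2) := by
    have := Finset.sum_range_succ' (fun a => (Real.sqrt 2)⁻¹ * dcoef i j a
        * iteratedDeriv a Gau (Real.sqrt 2 * h) * iteratedDeriv (n+1-a) Gau (g / Real.sqrt 2)) (n+1)
    simp only [Nat.succ_sub_succ_eq_sub, Nat.sub_zero] at this
    rw [Finset.sum_range_succ (fun a => (Real.sqrt 2)⁻¹ * dcoef i j a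
        * iteratedDeriv a Gau (Real.sqrt 2 * h) * iteratedDeriv (n+1-a) Gau (g / Real.sqrt 2)) (n+1)] at this
    rw [dcoef_eq_zero i j (n+1) (by omega)] at this
    simp only [mul_zero, zero_mul, add_zero] at this
    linarith [this]
  rw [← recomb]
  ring

lemma key_step_right (i j : ℕ) (IH : KeyStmt i j) : KeyStmt i (j+1) := by
  intro h g
  set n := i + j with hn
  have h1 : HasDerivAt (fun x : ℝ => iteratedDeriv i Gau (x + g/2))
      (iteratedDeriv (i+1) Gau (h+g/2)) h := by
    have := (hasDerivAt_iterGau i (h+g/2)).comp h ((hasDerivAt_id h).add_const (g/2))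
    simpa [Function.comp_def] using this
  have h2 : HasDerivAt (fun x : ℝ => iteratedDeriv j Gau (x - g/2))
      (iteratedDeriv (j+1) Gau (h-g/2)) h := by
    have := (hasDerivAt_iterGau j (h-g/2)).comp h ((hasDerivAt_id h).sub_const (g/2))
    simpa [Function.comp_def] using this
  have hA := h1.fun_mul h2
  have h3 : HasDerivAt (fun y : ℝ => iteratedDeriv i Gau (h + y/2))
      (iteratedDeriv (i+1) Gau (h+g/2) * (1/2)) g := by
    exact (hasDerivAt_iterGau i (h+g/2)).comp g (((hasDerivAt_id g).div_const 2).const_add h)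
  have h4 : HasDerivAt (fun y : ℝ => iteratedDeriv j Gau (h - y/2))
      (iteratedDeriv (j+1) Gau (h-g/2) * (-(1/2))) g := by
    have := (hasDerivAt_iterGau j (h-g/2)).comp g (((hasDerivAt_id g).div_const 2).const_sub h)
    simpa [Function.comp_def] using this
  have hB := h3.fun_mul h4
  have hRA : HasDerivAt
      (fun x : ℝ => ∑ a ∈ Finset.range (n+1),
        dcoef i j a * iteratedDeriv a Gau (Real.sqrt 2 * x) * iteratedDeriv (n-a) Gau (g / Real.sqrt 2))
      (∑ a ∈ Finset.range (n+1),
        dcoef i j a * (iteratedDeriv (a+1) Gau (Real.sqrt 2 * h) * Real.sqrt 2)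
          * iteratedDeriv (n-a) Gau (g / Real.sqrt 2)) h := by
    apply HasDerivAt.fun_sum
    intro a _
    have inner : HasDerivAt (fun x : ℝ => Real.sqrt 2 * x) (Real.sqrt 2) h := by
      simpa using (hasDerivAt_id h).const_mul (Real.sqrt 2)
    exact (((hasDerivAt_iterGau a (Real.sqrt 2 * h)).comp h inner).const_mul
      (dcoef i j a)).mul_const _
  have hRB : HasDerivAt
      (fun y : ℝ => ∑ a ∈ Finset.range (n+1),
        dcoef i j a * iteratedDeriv a Gau (Real.sqrt 2 * h) * iteratedDeriv (n-a) Gau (y / Real.sqrt 2))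
      (∑ a ∈ Finset.range (n+1),
        dcoef i j a * iteratedDeriv a Gau (Real.sqrt 2 * h)
          * (iteratedDeriv (n-a+1) Gau (g / Real.sqrt 2) * (1 / Real.sqrt 2))) g := by
    apply HasDerivAt.fun_sum
    intro a _
    exact ((hasDerivAt_iterGau (n-a) (g / Real.sqrt 2)).comp g
      ((hasDerivAt_id g).div_const (Real.sqrt 2))).const_mul _
  have efunA : (fun x : ℝ => iteratedDeriv i Gau (x + g/2) * iteratedDeriv j Gau (x - g/2))
      = (fun x : ℝ => ∑ a ∈ Finset.range (n+1),
        dcoef i j a * iteratedDeriv a Gau (Real.sqrt 2 * x) * iteratedDeriv (n-a) Gau (g / Real.sqrt 2)) := by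
    funext x; exact IH x g
  have efunB : (fun y : ℝ => iteratedDeriv i Gau (h + y/2) * iteratedDeriv j Gau (h - y/2))
      = (fun y : ℝ => ∑ a ∈ Finset.range (n+1),
        dcoef i j a * iteratedDeriv a Gau (Real.sqrt 2 * h) * iteratedDeriv (n-a) Gau (y / Real.sqrt 2)) := by
    funext y; exact IH h y
  have eA := (efunA ▸ hA).unique hRA
  have eB := (efunB ▸ hB).unique hRB
  have comb : iteratedDeriv i Gau (h+g/2) * iteratedDeriv (j+1) Gau (h-g/2)
      = (1/2) * (∑ a ∈ Finset.range (n+1),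
          dcoef i j a * (iteratedDeriv (a+1) Gau (Real.sqrt 2 * h) * Real.sqrt 2)
            * iteratedDeriv (n-a) Gau (g / Real.sqrt 2))
        - (∑ a ∈ Finset.range (n+1),
          dcoef i j a * iteratedDeriv a Gau (Real.sqrt 2 * h)
            * (iteratedDeriv (n-a+1) Gau (g / Real.sqrt 2) * (1 / Real.sqrt 2))) := by
    rw [← eA, ← eB]; ring
  rw [comb]
  have hcanL : (1/2) * (∑ a ∈ Finset.range (n+1),
          dcoef i j a * (iteratedDeriv (a+1) Gau (Real.sqrt 2 * h) * Real.sqrt 2)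
            * iteratedDeriv (n-a) Gau (g / Real.sqrt 2))
        - (∑ a ∈ Finset.range (n+1),
          dcoef i j a * iteratedDeriv a Gau (Real.sqrt 2 * h)
            * (iteratedDeriv (n-a+1) Gau (g / Real.sqrt 2) * (1 / Real.sqrt 2)))
      = (∑ a ∈ Finset.range (n+1), (Real.sqrt 2)⁻¹ * dcoef i j a
            * iteratedDeriv (a+1) Gau (Real.sqrt 2 * h) * iteratedDeriv (n-a) Gau (g / Real.sqrt 2))
        - (∑ a ∈ Finset.range (n+1), (Real.sqrt 2)⁻¹ * dcoef i j a
            * iteratedDeriv a Gau (Real.sqrt 2 * h) * iteratedDeriv (n+1-a) Gau (g / Real.sqrt 2)) := by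
    rw [Finset.mul_sum]
    congr 1
    · apply Finset.sum_congr rfl
      intro a _
      have e : (1:ℝ)/2 * Real.sqrt 2 = (Real.sqrt 2)⁻¹ := by
        rw [inv_eq_one_div, eq_div_iff sqrt2_ne, mul_assoc, sqrt2_sq]; norm_num
      rw [← e]; ring
    · apply Finset.sum_congr rfl
      intro a ha
      have ha' : a ≤ n := by simpa [Nat.lt_succ_iff] using Finset.mem_range.mp ha
      rw [show n - a + 1 = n + 1 - a from by omega, one_div]
      ring
  rw [hcanL]
  have hrange : i+(j+1)+1 = n+2 := by omega
  have hsub : ∀ a : ℕ, i+(j+1)-a = n+1-a := fun a => by omega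
  simp only [hrange, hsub]
  rw [Finset.sum_range_succ' (fun t => dcoef i (j+1) t * iteratedDeriv t Gau (Real.sqrt 2 * h)
      * iteratedDeriv (n+1-t) Gau (g / Real.sqrt 2)) (n+1)]
  simp only [Nat.succ_sub_succ_eq_sub, Nat.sub_zero, dcoef_succ_right, dcoef_zero_right]
  have expand : ∀ a ∈ Finset.range (n+1),
      (Real.sqrt 2)⁻¹ * (dcoef i j a - dcoef i j (a+1)) * iteratedDeriv (a+1) Gau (Real.sqrt 2 * h)
        * iteratedDeriv (n-a) Gau (g / Real.sqrt 2)
      = (Real.sqrt 2)⁻¹ * dcoef i j a * iteratedDeriv (a+1) Gau (Real.sqrt 2 * h)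
          * iteratedDeriv (n-a) Gau (g / Real.sqrt 2)
        - (Real.sqrt 2)⁻¹ * dcoef i j (a+1) * iteratedDeriv (a+1) Gau (Real.sqrt 2 * h)
          * iteratedDeriv (n-a) Gau (g / Real.sqrt 2) := by
    intro a _; ring
  rw [Finset.sum_congr rfl expand, Finset.sum_sub_distrib]
  have recomb : (∑ a ∈ Finset.range (n+1), (Real.sqrt 2)⁻¹ * dcoef i j (a+1)
        * iteratedDeriv (a+1) Gau (Real.sqrt 2 * h) * iteratedDeriv (n-a) Gau (g / Real.sqrt 2))
      + (Real.sqrt 2)⁻¹ * dcoef i j 0 * iteratedDeriv 0 Gau (Real.sqrt 2 * h)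
          * iteratedDeriv (n+1) Gau (g / Real.sqrt 2)
      = ∑ a ∈ Finset.range (n+1), (Real.sqrt 2)⁻¹ * dcoef i j a
          * iteratedDeriv a Gau (Real.sqrt 2 * h) * iteratedDeriv (n+1-a) Gau (g / Real.sqrt 2) := by
    have := Finset.sum_range_succ' (fun a => (Real.sqrt 2)⁻¹ * dcoef i j a
        * iteratedDeriv a Gau (Real.sqrt 2 * h) * iteratedDeriv (n+1-a) Gau (g / Real.sqrt 2)) (n+1)
    simp only [Nat.succ_sub_succ_eq_sub, Nat.sub_zero] at this
    rw [Finset.sum_range_succ (fun a => (Real.sqrt 2)⁻¹ * dcoef i j a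
        * iteratedDeriv a Gau (Real.sqrt 2 * h) * iteratedDeriv (n+1-a) Gau (g / Real.sqrt 2)) (n+1)] at this
    rw [dcoef_eq_zero i j (n+1) (by omega)] at this
    simp only [mul_zero, zero_mul, add_zero] at this
    linarith [this]
  rw [← recomb]
  ring

lemma key_all (i j : ℕ) : KeyStmt i j := by
  induction i with
  | zero =>
    induction j with
    | zero => exact key_base
    | succ j ihj => exact key_step_right 0 j ihj
  | succ i ihi => exact key_step_left i j ihi


lemma neg_one_pow_congr' (a b : ℕ) (hab : a % 2 = b % 2) : (-1:ℝ)^a = (-1)^b := by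
  rcases Nat.even_or_odd a with ha | ha
  · have hb : Even b := by rw [Nat.even_iff] at *; omega
    rw [ha.neg_one_pow, hb.neg_one_pow]
  · have hb : Odd b := by rw [Nat.odd_iff] at *; omega
    rw [ha.neg_one_pow, hb.neg_one_pow]

lemma pre_eq (n : ℕ) : (2:ℝ) ^ (-(n : ℝ) / 2) = ((Real.sqrt 2)^n)⁻¹ := by
  rw [Real.sqrt_eq_rpow, ← Real.rpow_natCast ((2:ℝ) ^ ((1:ℝ)/2)) n,
      ← Real.rpow_mul (by norm_num : (0:ℝ) ≤ 2),
      ← Real.rpow_neg (by norm_num : (0:ℝ) ≤ 2)]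
  congr 1
  ring

lemma Scoef_eq_Icc (i j t : ℕ) :
    Scoef i j t
      = ∑ s ∈ Finset.Icc (t - j) (min t i), (-1:ℝ)^(j+t+s) * (i.choose s) * (j.choose (t-s)) := by
  unfold Scoef
  rw [eq_comm]
  apply Finset.sum_subset
  · intro s hs
    simp only [Finset.mem_Icc, Finset.mem_range] at *
    omega
  · intro s hs hns
    simp only [Finset.mem_Icc, Finset.mem_range, not_and_or, not_le] at hs hns
    rcases hns with hlt | hgt
    · have : j < t - s := by omega
      rw [Nat.choose_eq_zero_of_lt this]; simp
    · have : i < s := by omega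
      rw [Nat.choose_eq_zero_of_lt this]; simp

lemma acoef_eq (i j t : ℕ) (ht : t ≤ i + j) :
    acoef i j t (i + j - t) = dcoef i j t := by
  unfold acoef dcoef
  have hn : ((t + (i + j - t) : ℕ) : ℝ) = ((i+j : ℕ) : ℝ) := by norm_cast; omega
  rw [hn, show -((i+j:ℕ):ℝ)/2 = -(((i+j:ℕ)):ℝ)/2 from rfl, pre_eq]
  rw [Scoef_eq_Icc]
  have hIcc : Finset.Icc (t - j) (min t i)
      = Finset.Icc ((t : ℕ) - j) (min t i) := rfl
  rw [mul_assoc, mul_assoc]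
  congr 1
  rw [← mul_assoc, Finset.mul_sum]
  apply Finset.sum_congr rfl
  intro s hs
  simp only [Finset.mem_Icc] at hs
  obtain ⟨hs1, hs2⟩ := hs
  have hsi : s ≤ i := le_trans hs2 (min_le_right _ _)
  have hst : s ≤ t := le_trans hs2 (min_le_left _ _)
  have hts : t - s ≤ j := by omega
  have hsub : i + j - t + s - i = j - (t - s) := by omega
  have hsign : (-1:ℝ)^(i + j - t + i + s) = (-1)^(j+t+s) := by
    apply neg_one_pow_congr'
    omega
  rw [hsub, hsign]
  have c1 : ((i.choose s : ℝ) * (Nat.factorial s) * (Nat.factorial (i-s))) = (Nat.factorial i : ℝ) := by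
    exact_mod_cast congrArg (Nat.cast (R := ℝ)) (Nat.choose_mul_factorial_mul_factorial hsi)
  have c2 : ((j.choose (t-s) : ℝ) * (Nat.factorial (t-s)) * (Nat.factorial (j-(t-s)))) = (Nat.factorial j : ℝ) := by
    exact_mod_cast congrArg (Nat.cast (R := ℝ)) (Nat.choose_mul_factorial_mul_factorial hts)
  have hne : ((Nat.factorial s : ℝ) * (Nat.factorial (i - s)) * (Nat.factorial (t - s)) * (Nat.factorial (j - (t-s)))) ≠ 0 := by
    positivity
  field_simp
  linear_combination (-1 * (j.choose (t-s)) * (Nat.factorial (t-s)) * (Nat.factorial (j-(t-s)))) * c1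
    - (1 * (Nat.factorial i)) * c2



theorem hermite_splitting_1d (i j : ℕ) (h g : ℝ) :
    He i (h + g/2) * He j (h - g/2)
      = ∑ t ∈ Finset.range (i + j + 1),
          acoef i j t (i + j - t) * He t (Real.sqrt 2 * h) * He (i + j - t) (g / Real.sqrt 2) := by
  have key : iteratedDeriv i (fun y => Real.exp (-(y^2)/2)) (h+g/2)
        * iteratedDeriv j (fun y => Real.exp (-(y^2)/2)) (h-g/2)
      = ∑ a ∈ Finset.range (i+j+1),
          dcoef i j a * iteratedDeriv a (fun y => Real.exp (-(y^2)/2)) (Real.sqrt 2*h)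
            * iteratedDeriv (i+j-a) (fun y => Real.exp (-(y^2)/2)) (g/Real.sqrt 2) := key_all i j h g
  have hE : Real.exp ((h+g/2)^2/2) * Real.exp ((h-g/2)^2/2)
      = Real.exp ((Real.sqrt 2*h)^2/2) * Real.exp ((g/Real.sqrt 2)^2/2) := by
    rw [← Real.exp_add, ← Real.exp_add]
    congr 1
    rw [mul_pow, div_pow, Real.sq_sqrt (by norm_num : (0:ℝ) ≤ 2)]
    ring
  simp only [He]
  calc (-1:ℝ)^i * Real.exp ((h+g/2)^2/2) * iteratedDeriv i (fun y => Real.exp (-(y^2)/2)) (h+g/2)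
        * ((-1:ℝ)^j * Real.exp ((h-g/2)^2/2) * iteratedDeriv j (fun y => Real.exp (-(y^2)/2)) (h-g/2))
      = (-1:ℝ)^(i+j) * (Real.exp ((h+g/2)^2/2) * Real.exp ((h-g/2)^2/2))
          * (iteratedDeriv i (fun y => Real.exp (-(y^2)/2)) (h+g/2)
             * iteratedDeriv j (fun y => Real.exp (-(y^2)/2)) (h-g/2)) := by
        rw [pow_add]; ring
    _ = (-1:ℝ)^(i+j) * (Real.exp ((Real.sqrt 2*h)^2/2) * Real.exp ((g/Real.sqrt 2)^2/2))
          * (∑ a ∈ Finset.range (i+j+1),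
              dcoef i j a * iteratedDeriv a (fun y => Real.exp (-(y^2)/2)) (Real.sqrt 2 * h)
                * iteratedDeriv (i+j-a) (fun y => Real.exp (-(y^2)/2)) (g / Real.sqrt 2)) := by
        rw [hE, key]
    _ = ∑ t ∈ Finset.range (i+j+1),
          (-1:ℝ)^(i+j) * (Real.exp ((Real.sqrt 2*h)^2/2) * Real.exp ((g/Real.sqrt 2)^2/2))
            * (dcoef i j t * iteratedDeriv t (fun y => Real.exp (-(y^2)/2)) (Real.sqrt 2 * h)
                * iteratedDeriv (i+j-t) (fun y => Real.exp (-(y^2)/2)) (g / Real.sqrt 2)) := by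
        rw [Finset.mul_sum]
    _ = ∑ t ∈ Finset.range (i+j+1),
          acoef i j t (i+j-t) * ((-1:ℝ)^t * Real.exp ((Real.sqrt 2*h)^2/2)
              * iteratedDeriv t (fun y => Real.exp (-(y^2)/2)) (Real.sqrt 2 * h))
            * ((-1:ℝ)^(i+j-t) * Real.exp ((g/Real.sqrt 2)^2/2)
              * iteratedDeriv (i+j-t) (fun y => Real.exp (-(y^2)/2)) (g / Real.sqrt 2)) := by
        apply Finset.sum_congr rfl
        intro t htmem
        have ht : t ≤ i + j := by
          simpa [Nat.lt_succ_iff] using Finset.mem_range.mp htmem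
        rw [acoef_eq i j t ht]
        have hpow : (-1:ℝ)^t * (-1:ℝ)^(i+j-t) = (-1:ℝ)^(i+j) := by
          rw [← pow_add, show t + (i+j-t) = i+j from by omega]
        calc (-1:ℝ)^(i+j) * (Real.exp ((Real.sqrt 2*h)^2/2) * Real.exp ((g/Real.sqrt 2)^2/2))
              * (dcoef i j t * iteratedDeriv t (fun y => Real.exp (-(y^2)/2)) (Real.sqrt 2 * h)
                  * iteratedDeriv (i+j-t) (fun y => Real.exp (-(y^2)/2)) (g / Real.sqrt 2))
            = ((-1:ℝ)^t * (-1:ℝ)^(i+j-t)) * (Real.exp ((Real.sqrt 2*h)^2/2) * Real.exp ((g/Real.sqrt 2)^2/2))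
              * (dcoef i j t * iteratedDeriv t (fun y => Real.exp (-(y^2)/2)) (Real.sqrt 2 * h)
                  * iteratedDeriv (i+j-t) (fun y => Real.exp (-(y^2)/2)) (g / Real.sqrt 2)) := by rw [hpow]
          _ = _ := by ring
end

section
/- For α > −1 and μ > −1, ∫_0^∞ L_m^{(α)}(s) L_n^{(α)}(s) s^μ e^{−s} ds = (−1)^{m+n} Γ(μ+1) Σ_{i=0}^{min(m,n)} C(μ−α, m−i) C(μ−α, n−i) C(i+μ, i), where C(x, k) = x(x−1)⋯(x−k+1)/k! is the generalized binomial coefficient. -/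
open Real MeasureTheory

/-- Generalized Laguerre polynomial via the Rodrigues formula. -/
noncomputable def Lag (n : ℕ) (α : ℝ) (x : ℝ) : ℝ :=
  x ^ (-α) * Real.exp x / (Nat.factorial n) *
    iteratedDeriv n (fun y => y ^ ((n : ℝ) + α) * Real.exp (-y)) x

/-- Generalized binomial coefficient `C(x, k) = x(x−1)⋯(x−k+1)/k!`. -/
noncomputable def gbinom (x : ℝ) (k : ℕ) : ℝ :=
  (∏ i ∈ Finset.range k, (x - i)) / (Nat.factorial k)

open Finset

lemma gbinom_zero (x : ℝ) : gbinom x 0 = 1 := by simp [gbinom]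

lemma gbinom_succ_mul (x : ℝ) (k : ℕ) :
    gbinom x (k+1) * (k+1) = gbinom x k * (x - k) := by
  have h1 : ((k+1).factorial : ℝ) ≠ 0 := Nat.cast_ne_zero.2 (Nat.factorial_ne_zero _)
  have h2 : ((k).factorial : ℝ) ≠ 0 := Nat.cast_ne_zero.2 (Nat.factorial_ne_zero _)
  simp only [gbinom, Finset.prod_range_succ, Nat.factorial_succ]
  field_simp
  push_cast
  ring

lemma gbinom_reflect (x : ℝ) (r : ℕ) :
    gbinom ((r:ℝ) - x - 1) r = (-1:ℝ)^r * gbinom x r := by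
  simp only [gbinom]
  rw [mul_div_assoc']
  rw [show ((-1:ℝ)^r * ∏ i ∈ range r, (x - i)) = ∏ i ∈ range r, (-1) * (x - i) by
    rw [Finset.prod_mul_distrib, Finset.prod_const]; simp]
  congr 1
  rw [← Finset.prod_range_reflect (fun i => (-1:ℝ)*(x - i)) r]
  refine Finset.prod_congr rfl (fun i hi => ?_)
  have hi' : i < r := Finset.mem_range.1 hi
  have : ((r - 1 - i : ℕ) : ℝ) = (r:ℝ) - 1 - i := by
    have : r - 1 - i = r - (1 + i) := by omega
    rw [this, Nat.cast_sub (by omega)]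
    push_cast; ring
  rw [this]; ring

lemma gbinom_vandermonde (r : ℕ) (A B : ℝ) :
    ∑ s ∈ Finset.range (r+1), gbinom A s * gbinom B (r - s) = gbinom (A + B) r := by
  induction r with
  | zero => simp [gbinom_zero]
  | succ r ih =>
    have hr1 : ((r:ℝ) + 1) ≠ 0 := by positivity
    have key : (∑ s ∈ Finset.range (r+2), gbinom A s * gbinom B (r + 1 - s)) * ((r:ℝ)+1) =
        (A + B - r) * ∑ s ∈ Finset.range (r+1), gbinom A s * gbinom B (r - s) := by
      rw [Finset.sum_mul]
      have split : ∀ s ∈ Finset.range (r+2),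
          gbinom A s * gbinom B (r + 1 - s) * ((r:ℝ)+1)
          = (s:ℝ) * gbinom A s * gbinom B (r + 1 - s)
            + gbinom A s * (((r + 1 - s : ℕ)):ℝ) * gbinom B (r + 1 - s) := by
        intro s hs
        have hs' : s ≤ r + 1 := by simpa [Nat.lt_succ_iff] using Finset.mem_range.1 hs
        have : ((r + 1 - s : ℕ) : ℝ) = (r:ℝ) + 1 - s := by
          rw [Nat.cast_sub hs']; push_cast; ring
        rw [this]; ring
      rw [Finset.sum_congr rfl split, Finset.sum_add_distrib]
      have e1 : ∑ s ∈ Finset.range (r+2), (s:ℝ) * gbinom A s * gbinom B (r + 1 - s)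
          = ∑ t ∈ Finset.range (r+1), (A - t) * (gbinom A t * gbinom B (r - t)) := by
        rw [Finset.sum_range_succ']
        simp only [Nat.cast_zero, zero_mul, add_zero]
        refine Finset.sum_congr rfl (fun t ht => ?_)
        have : r + 1 - (t + 1) = r - t := by omega
        rw [this]
        have := gbinom_succ_mul A t
        push_cast
        linear_combination gbinom B (r - t) * this
      have e2 : ∑ s ∈ Finset.range (r+2), gbinom A s * (((r + 1 - s : ℕ)):ℝ) * gbinom B (r + 1 - s)
          = ∑ s ∈ Finset.range (r+1), (B - ((r - s : ℕ):ℝ)) * (gbinom A s * gbinom B (r - s)) := by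
        rw [Finset.sum_range_succ]
        simp only [Nat.sub_self, Nat.cast_zero, mul_zero, zero_mul, add_zero]
        refine Finset.sum_congr rfl (fun s hs => ?_)
        have hs' : s ≤ r := by simpa [Nat.lt_succ_iff] using Finset.mem_range.1 hs
        have h1 : r + 1 - s = (r - s) + 1 := by omega
        rw [h1]
        have := gbinom_succ_mul B (r - s)
        push_cast
        linear_combination gbinom A s * this
      rw [e1, e2, ← Finset.sum_add_distrib, Finset.mul_sum]
      refine Finset.sum_congr rfl (fun s hs => ?_)
      have hs' : s ≤ r := by simpa [Nat.lt_succ_iff] using Finset.mem_range.1 hs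
      have : ((r - s : ℕ) : ℝ) = (r:ℝ) - s := by rw [Nat.cast_sub hs']
      rw [this]; ring
    have key2 : gbinom (A+B) (r+1) * ((r:ℝ)+1) = (A + B - r) * gbinom (A+B) r := by
      have := gbinom_succ_mul (A+B) r
      push_cast at this ⊢
      linarith [this]
    rw [ih] at key
    have := key.trans key2.symm
    exact mul_right_cancel₀ hr1 this

lemma gbinom_natCast (k i : ℕ) : gbinom (k:ℝ) i = (k.choose i : ℝ) := by
  rcases le_or_gt i k with h | h
  · have hnum : (∏ t ∈ Finset.range i, ((k:ℝ) - t)) = (k.descFactorial i : ℝ) := by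
      rw [Nat.descFactorial_eq_prod_range, Nat.cast_prod]
      refine Finset.prod_congr rfl (fun t ht => ?_)
      have : t ≤ k := le_trans (Nat.le_of_lt_succ (Nat.lt_succ_of_lt (Finset.mem_range.1 ht))) h
      rw [Nat.cast_sub this]
    rw [gbinom, hnum]
    rw [Nat.descFactorial_eq_factorial_mul_choose]
    push_cast
    field_simp [Nat.factorial_ne_zero]
  · rw [Nat.choose_eq_zero_of_lt h, gbinom]
    rw [Finset.prod_eq_zero (Finset.mem_range.2 h) (by simp)]
    simp

lemma gbinom_split (μ : ℝ) {i k : ℕ} (h : i ≤ k) :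
    gbinom (μ + k) (k - i) * gbinom ((i:ℝ) + μ) i = gbinom (μ + k) k * (k.choose i : ℝ) := by
  have hnum : (∏ t ∈ Finset.range (k-i), (μ + k - t)) * (∏ t ∈ Finset.range i, ((i:ℝ) + μ - t))
      = ∏ t ∈ Finset.range k, (μ + k - t) := by
    rw [show (Finset.range k) = Finset.range ((k-i)+i) from by rw [Nat.sub_add_cancel h]]
    rw [Finset.prod_range_add]
    congr 1
    refine Finset.prod_congr rfl (fun s hs => ?_)
    have h1 : (((k - i) + s : ℕ) : ℝ) = (k:ℝ) - i + s := by
      rw [Nat.cast_add, Nat.cast_sub h]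
    rw [h1]
    ring
  have hfact : ((k.choose i : ℝ) * i.factorial * (k-i).factorial) = (k.factorial : ℝ) := by
    exact_mod_cast congrArg (Nat.cast : ℕ → ℝ) (Nat.choose_mul_factorial_mul_factorial h)
  simp only [gbinom]
  rw [div_mul_div_comm, hnum]
  have h2 : ((k-i).factorial : ℝ) ≠ 0 := Nat.cast_ne_zero.2 (Nat.factorial_ne_zero _)
  have h3 : ((i).factorial : ℝ) ≠ 0 := Nat.cast_ne_zero.2 (Nat.factorial_ne_zero _)
  have h4 : ((k).factorial : ℝ) ≠ 0 := Nat.cast_ne_zero.2 (Nat.factorial_ne_zero _)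
  field_simp
  linear_combination (-(∏ t ∈ Finset.range k, (μ + k - t))) * hfact

lemma D_aux (μ : ℝ) {j k : ℕ} (hjk : j ≤ k) :
    ∑ i ∈ Finset.range (j+1),
        gbinom (μ + j) (j - i) * gbinom (μ + k) (k - i) * gbinom ((i:ℝ) + μ) i
      = gbinom (μ + k) k * gbinom ((k:ℝ) + (μ + j)) j := by
  have step : ∀ i ∈ Finset.range (j+1),
      gbinom (μ + j) (j - i) * gbinom (μ + k) (k - i) * gbinom ((i:ℝ) + μ) i
        = gbinom (μ + k) k * (gbinom ((k:ℕ):ℝ) i * gbinom (μ + j) (j - i)) := by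
    intro i hi
    have hik : i ≤ k := le_trans (Nat.lt_succ_iff.1 (Finset.mem_range.1 hi)) hjk
    rw [gbinom_natCast]
    have := gbinom_split μ hik
    linear_combination gbinom (μ + j) (j - i) * this
  rw [Finset.sum_congr rfl step, ← Finset.mul_sum, gbinom_vandermonde j ((k:ℕ):ℝ) (μ + j)]

lemma D_le (μ : ℝ) {j k : ℕ} (hjk : j ≤ k) :
    (∏ t ∈ Finset.range (j+k), (μ + 1 + t)) / ((j.factorial : ℝ) * k.factorial)
      = ∑ i ∈ Finset.range (min j k + 1),
          gbinom (μ + j) (j - i) * gbinom (μ + k) (k - i) * gbinom ((i:ℝ) + μ) i := by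
  rw [Nat.min_eq_left hjk, D_aux μ hjk]
  have h1 : ∏ t ∈ Finset.range (j+k), (μ + 1 + t)
      = ∏ t ∈ Finset.range (j+k), (μ + (j:ℝ) + k - t) := by
    rw [← Finset.prod_range_reflect (fun t => μ + 1 + (t:ℝ)) (j+k)]
    refine Finset.prod_congr rfl (fun t ht => ?_)
    have ht' : t < j + k := Finset.mem_range.1 ht
    have : ((j + k - 1 - t : ℕ) : ℝ) = (j:ℝ) + k - 1 - t := by
      rw [show j + k - 1 - t = j + k - (1 + t) from by omega, Nat.cast_sub (by omega)]
      push_cast; ring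
    simp only [this]; ring
  rw [h1, Finset.prod_range_add]
  simp only [gbinom]
  rw [div_mul_div_comm]
  have hprod2 : ∏ s ∈ Finset.range k, (μ + (j:ℝ) + k - ((j:ℕ) + s : ℕ))
      = ∏ t ∈ Finset.range k, (μ + k - t) := by
    refine Finset.prod_congr rfl (fun s hs => ?_); push_cast; ring
  have hprod1 : ∏ t ∈ Finset.range j, (μ + (j:ℝ) + k - t)
      = ∏ t ∈ Finset.range j, ((k:ℝ) + (μ + j) - t) := by
    refine Finset.prod_congr rfl (fun s hs => ?_); ring_nf
  rw [hprod2, hprod1]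
  rw [mul_comm ((j.factorial : ℝ)) (k.factorial : ℝ), mul_comm (∏ t ∈ Finset.range j, ((k:ℝ) + (μ + j) - t))]

lemma D_eq (μ : ℝ) (j k : ℕ) :
    (∏ t ∈ Finset.range (j+k), (μ + 1 + t)) / ((j.factorial : ℝ) * k.factorial)
      = ∑ i ∈ Finset.range (min j k + 1),
          gbinom (μ + j) (j - i) * gbinom (μ + k) (k - i) * gbinom ((i:ℝ) + μ) i := by
  rcases le_or_gt j k with h | h
  · exact D_le μ h
  · have := D_le μ h.le
    rw [Nat.add_comm k j, mul_comm ((k.factorial:ℝ)) (j.factorial:ℝ), Nat.min_comm k j] at this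
    rw [this]
    refine Finset.sum_congr rfl (fun i hi => ?_)
    ring

lemma Gamma_shift (μ : ℝ) (hμ : 0 < μ + 1) (N : ℕ) :
    Real.Gamma (μ + 1 + N) = Real.Gamma (μ + 1) * ∏ t ∈ Finset.range N, (μ + 1 + t) := by
  induction N with
  | zero => simp
  | succ N ih =>
    have h : μ + 1 + (N:ℝ) ≠ 0 := by positivity
    have h2 : μ + 1 + ((N+1:ℕ):ℝ) = (μ + 1 + N) + 1 := by push_cast; ring
    rw [h2, Real.Gamma_add_one h, ih, Finset.prod_range_succ]
    ring

lemma V_eq (α μ : ℝ) {i m : ℕ} (him : i ≤ m) :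
    ∑ j ∈ Finset.range (m+1),
        (if i ≤ j then (-1:ℝ)^j * gbinom ((m:ℝ) + α) (m - j) * gbinom (μ + j) (j - i) else 0)
      = (-1:ℝ)^m * gbinom (μ - α) (m - i) := by
  rw [← Finset.sum_filter]
  have hfil : (Finset.range (m+1)).filter (fun j => i ≤ j) = Finset.Ico i (m+1) := by
    ext j; simp [Nat.lt_succ_iff]; omega
  rw [hfil, Finset.sum_Ico_eq_sum_range]
  have hm1 : m + 1 - i = (m - i) + 1 := by omega
  rw [hm1]
  have step : ∀ s ∈ Finset.range ((m-i)+1),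
      (-1:ℝ)^(i+s) * gbinom ((m:ℝ) + α) (m - (i+s)) * gbinom (μ + ((i+s:ℕ):ℝ)) ((i+s) - i)
        = (-1:ℝ)^i * (gbinom (-μ - i - 1) s * gbinom ((m:ℝ) + α) ((m-i) - s)) := by
    intro s hs
    have hs' : s ≤ m - i := Nat.lt_succ_iff.1 (Finset.mem_range.1 hs)
    have e1 : (i+s) - i = s := by omega
    have e2 : m - (i+s) = (m-i) - s := by omega
    have e3 : μ + ((i+s:ℕ):ℝ) = ((s:ℕ):ℝ) - (-μ - i - 1) - 1 := by push_cast; ring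
    rw [e1, e2, e3, gbinom_reflect]
    have e4 : (-1:ℝ)^(i+s) * (-1:ℝ)^s = (-1:ℝ)^i := by
      rw [pow_add, mul_assoc, ← pow_add, ← two_mul, pow_mul]
      norm_num
    linear_combination gbinom ((m:ℝ) + α) (m - i - s) * gbinom (-μ - i - 1) s * e4
  rw [Finset.sum_congr rfl step, ← Finset.mul_sum, gbinom_vandermonde (m-i) (-μ - i - 1) ((m:ℝ)+α)]
  have e5 : -μ - i - 1 + ((m:ℝ) + α) = ((m - i : ℕ):ℝ) - (μ - α) - 1 := by
    rw [Nat.cast_sub him]; ring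
  rw [e5, gbinom_reflect]
  have e6 : (-1:ℝ)^i * (-1:ℝ)^(m-i) = (-1:ℝ)^m := by
    rw [← pow_add]; congr 1; omega
  linear_combination gbinom (μ - α) (m - i) * e6

lemma sum_key (k : ℕ) (c : ℝ) (T : ℕ → ℝ) :
    (∑ j ∈ Finset.range (k+1), (k.choose j : ℝ) * (∏ i ∈ Finset.range j, (c - i)) *
        ((-1:ℝ)^k * (-1:ℝ)^j) * ((c - j) * T (j+1) - T j))
    = ∑ j ∈ Finset.range (k+2), ((k+1).choose j : ℝ) * (∏ i ∈ Finset.range j, (c - i)) *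
        (-(-1:ℝ)^k * (-1:ℝ)^j) * T j := by
  set P : ℕ → ℝ := fun j => ∏ i ∈ Finset.range j, (c - i) with hP
  have hPsucc : ∀ j : ℕ, P j * (c - j) = P (j+1) := by
    intro j; rw [hP]; simp [Finset.prod_range_succ]
  rw [Finset.sum_range_succ' (fun j => ((k+1).choose j : ℝ) * P j * (-(-1:ℝ)^k * (-1:ℝ)^j) * T j) (k+1)]
  have hpascal : ∀ j ∈ Finset.range (k+1),
      ((k+1).choose (j+1) : ℝ) * P (j+1) * (-(-1:ℝ)^k * (-1:ℝ)^(j+1)) * T (j+1)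
      = (k.choose j : ℝ) * P j * ((-1:ℝ)^k * (-1:ℝ)^j) * ((c - j) * T (j+1))
        + (k.choose (j+1) : ℝ) * P (j+1) * (-(-1:ℝ)^k * (-1:ℝ)^(j+1)) * T (j+1) := by
    intro j hj
    have : ((k+1).choose (j+1) : ℝ) = (k.choose j : ℝ) + (k.choose (j+1) : ℝ) := by
      exact_mod_cast congrArg (Nat.cast : ℕ → ℝ) (Nat.choose_succ_succ k j)
    rw [this, ← hPsucc j]
    ring
  rw [Finset.sum_congr rfl hpascal, Finset.sum_add_distrib]
  have hsecond : (∑ j ∈ Finset.range (k+1),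
        (k.choose (j+1) : ℝ) * P (j+1) * (-(-1:ℝ)^k * (-1:ℝ)^(j+1)) * T (j+1))
      + ((k).choose 0 : ℝ) * P 0 * (-(-1:ℝ)^k * (-1:ℝ)^(0:ℕ)) * T 0
      = ∑ j ∈ Finset.range (k+1), (k.choose j : ℝ) * P j * (-((-1:ℝ)^k * (-1:ℝ)^j)) * T j := by
    rw [← Finset.sum_range_succ' (fun j => (k.choose j : ℝ) * P j * (-(-1:ℝ)^k * (-1:ℝ)^j) * T j) (k+1)]
    rw [Finset.sum_range_succ]
    simp [Nat.choose_succ_self]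
  rw [show ((k+1).choose 0 : ℝ) = ((k).choose 0 : ℝ) by simp]
  rw [add_assoc, hsecond, ← Finset.sum_add_distrib]
  refine Finset.sum_congr rfl (fun j hj => ?_)
  ring

lemma iter_deriv_eqOn (c : ℝ) (k : ℕ) :
    Set.EqOn (iteratedDeriv k (fun y => y ^ c * Real.exp (-y)))
      (fun x : ℝ => ∑ j ∈ Finset.range (k+1),
        (k.choose j : ℝ) * (∏ i ∈ Finset.range j, (c - i)) * ((-1:ℝ)^k * (-1:ℝ)^j) *
          (x ^ (c - j) * Real.exp (-x)))
      (Set.Ioi 0) := by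
  induction k with
  | zero =>
    intro x hx
    simp [iteratedDeriv_zero]
  | succ k ih =>
    intro x hx
    have hx0 : (0:ℝ) < x := hx
    rw [iteratedDeriv_succ]
    rw [(ih.eventuallyEq_of_mem (isOpen_Ioi.mem_nhds hx)).deriv_eq]
    have hterm : ∀ j ∈ Finset.range (k+1),
        HasDerivAt (fun y : ℝ => (k.choose j : ℝ) * (∏ i ∈ Finset.range j, (c - i)) *
            ((-1:ℝ)^k * (-1:ℝ)^j) * (y ^ (c - j) * Real.exp (-y)))
          ((k.choose j : ℝ) * (∏ i ∈ Finset.range j, (c - i)) * ((-1:ℝ)^k * (-1:ℝ)^j) *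
            ((c - j) * x ^ (c - j - 1) * Real.exp (-x) + x ^ (c - j) * (Real.exp (-x) * (-1)))) x := by
      intro j hj
      have h1 : HasDerivAt (fun y : ℝ => y ^ (c - j)) ((c - j) * x ^ (c - j - 1)) x :=
        Real.hasDerivAt_rpow_const (Or.inl hx0.ne')
      have h2 : HasDerivAt (fun y : ℝ => Real.exp (-y)) (Real.exp (-x) * (-1)) x :=
        (Real.hasDerivAt_exp (-x)).comp x (hasDerivAt_neg x)
      exact (h1.mul h2).const_mul _
    rw [(HasDerivAt.fun_sum hterm).deriv]
    have step : ∀ j ∈ Finset.range (k+1),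
        (k.choose j : ℝ) * (∏ i ∈ Finset.range j, (c - i)) * ((-1:ℝ)^k * (-1:ℝ)^j) *
            ((c - j) * x ^ (c - j - 1) * Real.exp (-x) + x ^ (c - j) * (Real.exp (-x) * (-1)))
        = (k.choose j : ℝ) * (∏ i ∈ Finset.range j, (c - i)) * ((-1:ℝ)^k * (-1:ℝ)^j) *
            ((c - j) * (x ^ (c - ((j+1:ℕ):ℝ)) * Real.exp (-x)) - x ^ (c - j) * Real.exp (-x)) := by
      intro j hj
      have : c - (j:ℝ) - 1 = c - ((j+1:ℕ):ℝ) := by push_cast; ring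
      rw [← this]
      ring
    rw [Finset.sum_congr rfl step, sum_key k c (fun j => x ^ (c - (j:ℕ)) * Real.exp (-x))]
    refine Finset.sum_congr rfl (fun j hj => ?_)
    have : (-1:ℝ)^(k+1) = -(-1:ℝ)^k := by ring
    rw [this]

lemma Lag_eq (n : ℕ) (α : ℝ) {x : ℝ} (hx : 0 < x) :
    Lag n α x = ∑ k ∈ Finset.range (n+1),
      (-1:ℝ)^k * gbinom ((n:ℝ) + α) (n - k) * x ^ k / k.factorial := by
  rw [Lag, iter_deriv_eqOn ((n:ℝ)+α) n hx]
  rw [← Finset.sum_range_reflect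
    (fun k => (-1:ℝ)^k * gbinom ((n:ℝ) + α) (n - k) * x ^ k / k.factorial) (n+1)]
  rw [Finset.mul_sum]
  refine Finset.sum_congr rfl (fun j hj => ?_)
  have hj' : j ≤ n := Nat.lt_succ_iff.1 (Finset.mem_range.1 hj)
  simp only [Nat.add_sub_cancel]
  rw [show n - (n - j) = j from by omega]
  rw [gbinom]
  have key : x ^ (-α) * (x ^ ((n:ℝ) + α - (j:ℝ))) = x ^ ((n - j : ℕ)) := by
    rw [← Real.rpow_natCast x (n-j), ← Real.rpow_add hx]
    congr 1
    rw [Nat.cast_sub hj']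
    ring
  have hsign : (-1:ℝ)^(n-j) * (-1:ℝ)^j = (-1:ℝ)^n := by
    rw [← pow_add]; congr 1; omega
  have hsq : (-1:ℝ)^j * (-1:ℝ)^j = 1 := by
    rw [← pow_add, ← two_mul, pow_mul]; norm_num
  have hsign' : (-1:ℝ)^(n-j) = (-1:ℝ)^n * (-1:ℝ)^j := by
    calc (-1:ℝ)^(n-j) = (-1:ℝ)^(n-j) * ((-1:ℝ)^j * (-1:ℝ)^j) := by rw [hsq, mul_one]
    _ = (-1:ℝ)^n * (-1:ℝ)^j := by rw [← mul_assoc, hsign]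
  have hfact : ((n.choose j : ℝ)) * (j.factorial : ℝ) * ((n-j).factorial : ℝ) = (n.factorial : ℝ) := by
    exact_mod_cast congrArg (Nat.cast : ℕ → ℝ) (Nat.choose_mul_factorial_mul_factorial hj')
  have hexp : Real.exp x * Real.exp (-x) = 1 := by
    rw [← Real.exp_add]; simp
  have hne1 : (n.factorial : ℝ) ≠ 0 := Nat.cast_ne_zero.2 (Nat.factorial_ne_zero _)
  have hne2 : (j.factorial : ℝ) ≠ 0 := Nat.cast_ne_zero.2 (Nat.factorial_ne_zero _)
  have hne3 : ((n-j).factorial : ℝ) ≠ 0 := Nat.cast_ne_zero.2 (Nat.factorial_ne_zero _)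
  rw [hsign']
  field_simp
  linear_combination (Real.exp x * Real.exp (-x) * (n.choose j : ℝ) *
      (∏ i ∈ Finset.range j, ((n:ℝ) + α - ↑i)) * (j.factorial : ℝ) * ((n-j).factorial : ℝ)) * key
    + ((∏ i ∈ Finset.range j, ((n:ℝ) + α - ↑i)) * x ^ (n-j)
        * (n.choose j : ℝ) * (j.factorial : ℝ) * ((n-j).factorial : ℝ)) * hexp
    + ((∏ i ∈ Finset.range j, ((n:ℝ) + α - ↑i)) * x ^ (n-j)) * hfact

lemma final_sum (α μ : ℝ) (hμ1 : (0:ℝ) < μ + 1) (m n : ℕ) :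
    ∑ j ∈ Finset.range (m+1), ∑ k ∈ Finset.range (n+1),
      (((-1:ℝ)^j * gbinom ((m:ℝ)+α) (m-j) / j.factorial) *
        ((-1:ℝ)^k * gbinom ((n:ℝ)+α) (n-k) / k.factorial)) * Real.Gamma (μ + j + k + 1)
    = (-1:ℝ)^(m+n) * Real.Gamma (μ+1) * ∑ i ∈ Finset.range (min m n + 1),
        gbinom (μ-α) (m-i) * gbinom (μ-α) (n-i) * gbinom ((i:ℝ)+μ) i := by
  have step : ∀ j ∈ Finset.range (m+1), ∀ k ∈ Finset.range (n+1),
      (((-1:ℝ)^j * gbinom ((m:ℝ)+α) (m-j) / j.factorial) *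
        ((-1:ℝ)^k * gbinom ((n:ℝ)+α) (n-k) / k.factorial)) * Real.Gamma (μ + j + k + 1)
      = Real.Gamma (μ+1) * ∑ i ∈ Finset.range (min m n + 1),
          (if i ≤ j ∧ i ≤ k then
            ((-1:ℝ)^j * gbinom ((m:ℝ)+α) (m-j) * gbinom (μ + j) (j - i)) *
            ((-1:ℝ)^k * gbinom ((n:ℝ)+α) (n-k) * gbinom (μ + k) (k - i)) *
            gbinom ((i:ℝ)+μ) i
          else 0) := by
    intro j hj k hk
    have hjm : j ≤ m := Nat.lt_succ_iff.1 (Finset.mem_range.1 hj)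
    have hkn : k ≤ n := Nat.lt_succ_iff.1 (Finset.mem_range.1 hk)
    have h1 : μ + (j:ℝ) + (k:ℝ) + 1 = μ + 1 + ((j+k:ℕ):ℝ) := by push_cast; ring
    rw [h1, Gamma_shift μ hμ1 (j+k)]
    have h2 : (((-1:ℝ)^j * gbinom ((m:ℝ)+α) (m-j) / j.factorial) *
        ((-1:ℝ)^k * gbinom ((n:ℝ)+α) (n-k) / k.factorial)) *
        (Real.Gamma (μ+1) * ∏ t ∈ Finset.range (j+k), (μ + 1 + t))
        = Real.Gamma (μ+1) * (((-1:ℝ)^j * gbinom ((m:ℝ)+α) (m-j)) *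
            ((-1:ℝ)^k * gbinom ((n:ℝ)+α) (n-k)) *
            ((∏ t ∈ Finset.range (j+k), (μ + 1 + t)) / ((j.factorial : ℝ) * k.factorial))) := by
      field_simp
    rw [h2, D_eq μ j k]
    have h3 : Finset.range (min j k + 1)
        = (Finset.range (min m n + 1)).filter (fun i => i ≤ j ∧ i ≤ k) := by
      ext i
      simp only [Finset.mem_range, Finset.mem_filter]
      omega
    rw [h3]
    rw [Finset.sum_filter (fun i => i ≤ j ∧ i ≤ k) (fun i => gbinom (μ + (j:ℝ)) (j - i) * gbinom (μ + (k:ℝ)) (k - i) * gbinom ((i:ℝ) + μ) i)]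
    simp only [Finset.mul_sum]
    refine Finset.sum_congr rfl (fun i hi => ?_)
    by_cases h : i ≤ j ∧ i ≤ k
    · simp only [if_pos h]; ring
    · simp only [if_neg h, mul_zero]
  rw [Finset.sum_congr rfl (fun j hj => Finset.sum_congr rfl (step j hj))]
  simp only [← Finset.mul_sum]
  -- now: Γ * Σ_j Σ_k Σ_i ite = RHS
  set G : ℕ → ℕ → ℕ → ℝ := fun j k i =>
    if i ≤ j ∧ i ≤ k then
      ((-1:ℝ)^j * gbinom ((m:ℝ)+α) (m-j) * gbinom (μ + j) (j - i)) *
      ((-1:ℝ)^k * gbinom ((n:ℝ)+α) (n-k) * gbinom (μ + k) (k - i)) *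
      gbinom ((i:ℝ)+μ) i
    else 0 with hG
  have swap : (∑ j ∈ Finset.range (m+1), ∑ k ∈ Finset.range (n+1),
        ∑ i ∈ Finset.range (min m n + 1), G j k i)
      = ∑ i ∈ Finset.range (min m n + 1), ∑ j ∈ Finset.range (m+1),
          ∑ k ∈ Finset.range (n+1), G j k i := by
    calc (∑ j ∈ Finset.range (m+1), ∑ k ∈ Finset.range (n+1),
            ∑ i ∈ Finset.range (min m n + 1), G j k i)
        = ∑ j ∈ Finset.range (m+1), ∑ i ∈ Finset.range (min m n + 1),
            ∑ k ∈ Finset.range (n+1), G j k i :=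
          Finset.sum_congr rfl (fun j _ => Finset.sum_comm)
      _ = ∑ i ∈ Finset.range (min m n + 1), ∑ j ∈ Finset.range (m+1),
            ∑ k ∈ Finset.range (n+1), G j k i := Finset.sum_comm
  rw [swap]
  have inner : ∀ i ∈ Finset.range (min m n + 1),
      (∑ j ∈ Finset.range (m+1), ∑ k ∈ Finset.range (n+1), G j k i)
      = ((-1:ℝ)^m * gbinom (μ-α) (m-i)) * ((-1:ℝ)^n * gbinom (μ-α) (n-i)) *
          gbinom ((i:ℝ)+μ) i := by
    intro i hi
    have hi' := Finset.mem_range.1 hi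
    have him : i ≤ m := by omega
    have hin : i ≤ n := by omega
    have hsplit : ∀ j k : ℕ, G j k i
        = (if i ≤ j then (-1:ℝ)^j * gbinom ((m:ℝ)+α) (m-j) * gbinom (μ+j) (j-i) else 0)
          * (if i ≤ k then (-1:ℝ)^k * gbinom ((n:ℝ)+α) (n-k) * gbinom (μ+k) (k-i) else 0)
          * gbinom ((i:ℝ)+μ) i := by
      intro j k
      rw [hG]
      by_cases h1 : i ≤ j <;> by_cases h2 : i ≤ k <;> simp [h1, h2]
    simp only [hsplit]
    rw [← V_eq α μ him, ← V_eq α μ hin]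
    rw [Finset.sum_mul_sum, Finset.sum_mul]
    refine Finset.sum_congr rfl (fun j _ => ?_)
    rw [Finset.sum_mul]
  rw [Finset.sum_congr rfl inner, Finset.mul_sum, Finset.mul_sum]
  refine Finset.sum_congr rfl (fun i hi => ?_)
  rw [pow_add]
  ring

lemma integrable_rpow_exp {p : ℝ} (hp : -1 < p) :
    IntegrableOn (fun s : ℝ => s ^ p * Real.exp (-s)) (Set.Ioi 0) := by
  have h := Real.GammaIntegral_convergent (by linarith : 0 < p + 1)
  simp only [add_sub_cancel_right] at h
  exact h.congr_fun (fun x hx => mul_comm _ _) measurableSet_Ioi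

lemma integral_rpow_exp {p : ℝ} (hp : -1 < p) :
    ∫ s in Set.Ioi (0:ℝ), s ^ p * Real.exp (-s) = Real.Gamma (p + 1) := by
  rw [Real.Gamma_eq_integral (by linarith : 0 < p + 1)]
  simp only [add_sub_cancel_right]
  exact setIntegral_congr_fun measurableSet_Ioi (fun x hx => mul_comm _ _)

theorem laguerre_product_integral (α μ : ℝ) (hα : -1 < α) (hμ : -1 < μ) (m n : ℕ) :
    ∫ s in Set.Ioi (0:ℝ), Lag m α s * Lag n α s * s ^ μ * Real.exp (-s)
      = (-1:ℝ)^(m + n) * Real.Gamma (μ + 1) *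
          ∑ i ∈ Finset.range (min m n + 1),
            gbinom (μ - α) (m - i) * gbinom (μ - α) (n - i) * gbinom ((i : ℝ) + μ) i := by
  have hμ1 : (0:ℝ) < μ + 1 := by linarith
  have hEq : Set.EqOn (fun s : ℝ => Lag m α s * Lag n α s * s ^ μ * Real.exp (-s))
      (fun s : ℝ => ∑ j ∈ Finset.range (m+1), ∑ k ∈ Finset.range (n+1),
        (((-1:ℝ)^j * gbinom ((m:ℝ)+α) (m-j) / j.factorial) *
          ((-1:ℝ)^k * gbinom ((n:ℝ)+α) (n-k) / k.factorial)) *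
          (s ^ (μ + (j:ℝ) + (k:ℝ)) * Real.exp (-s))) (Set.Ioi 0) := by
    intro s hs
    have hs0 : (0:ℝ) < s := hs
    simp only
    rw [Lag_eq m α hs0, Lag_eq n α hs0, Finset.sum_mul_sum]
    rw [Finset.sum_mul, Finset.sum_mul]
    refine Finset.sum_congr rfl (fun j hj => ?_)
    rw [Finset.sum_mul, Finset.sum_mul]
    refine Finset.sum_congr rfl (fun k hk => ?_)
    have hpow : s ^ (μ + (j:ℝ) + (k:ℝ)) = s ^ μ * s ^ (j:ℕ) * s ^ (k:ℕ) := by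
      rw [Real.rpow_add hs0, Real.rpow_add hs0, Real.rpow_natCast, Real.rpow_natCast]
    rw [hpow]
    ring
  rw [setIntegral_congr_fun measurableSet_Ioi hEq]
  have hint : ∀ (j k : ℕ) (c : ℝ), IntegrableOn
      (fun s : ℝ => c * (s ^ (μ + (j:ℝ) + (k:ℝ)) * Real.exp (-s))) (Set.Ioi 0) := by
    intro j k c
    have hp : (-1:ℝ) < μ + (j:ℝ) + (k:ℝ) := by
      have h1 : (0:ℝ) ≤ (j:ℝ) := Nat.cast_nonneg j
      have h2 : (0:ℝ) ≤ (k:ℝ) := Nat.cast_nonneg k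
      linarith
    exact (integrable_rpow_exp hp).const_mul c
  rw [MeasureTheory.integral_finset_sum _ (fun j _ => integrable_finset_sum _ (fun k _ => hint j k _))]
  have hterm : ∀ j ∈ Finset.range (m+1),
      (∫ s in Set.Ioi (0:ℝ), ∑ k ∈ Finset.range (n+1),
        (((-1:ℝ)^j * gbinom ((m:ℝ)+α) (m-j) / j.factorial) *
          ((-1:ℝ)^k * gbinom ((n:ℝ)+α) (n-k) / k.factorial)) *
          (s ^ (μ + (j:ℝ) + (k:ℝ)) * Real.exp (-s)))
      = ∑ k ∈ Finset.range (n+1),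
        (((-1:ℝ)^j * gbinom ((m:ℝ)+α) (m-j) / j.factorial) *
          ((-1:ℝ)^k * gbinom ((n:ℝ)+α) (n-k) / k.factorial)) * Real.Gamma (μ + j + k + 1) := by
    intro j _
    rw [MeasureTheory.integral_finset_sum _ (fun k _ => hint j k _)]
    refine Finset.sum_congr rfl (fun k _ => ?_)
    rw [MeasureTheory.integral_const_mul]
    have hp : (-1:ℝ) < μ + (j:ℝ) + (k:ℝ) := by
      have h1 : (0:ℝ) ≤ (j:ℝ) := Nat.cast_nonneg j
      have h2 : (0:ℝ) ≤ (k:ℝ) := Nat.cast_nonneg k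
      linarith
    rw [integral_rpow_exp hp]
  rw [Finset.sum_congr rfl hterm]
  exact final_sum α μ hμ1 m n
end
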